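/- Let Q : dom Q ⊆ H → K be a linear operator. An element φ ∈ H belongs to ran Q* (range of the adjoint relation Q*) if and only if there exists c_φ < ∞ such that |⟨f, φ⟩| ≤ c_φ ‖Q f‖ for all f ∈ dom Q. -/

import Mathlib

open scoped InnerProductSpace
open Filter Topology

noncomputable section

variable {E F F' : Type*}
  [NormedAddCommGroup E] [InnerProductSpace ℂ E] [CompleteSpace E]
  [NormedAddCommGroup F] [InnerProductSpace ℂ F] [CompleteSpace F]
  [NormedAddCommGroup F'] [InnerProductSpace ℂ F'] [CompleteSpace F']

/-- The domain of a linear relation from `E` to `F`. -/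
def dom (T : Set (E × F)) : Set E := Prod.fst '' T

/-- The range of a linear relation from `E` to `F`. -/
def ran (T : Set (E × F)) : Set F := Prod.snd '' T

/-- The multivalued part of a linear relation. -/
def mulp (T : Set (E × F)) : Set F := {y | ((0 : E), y) ∈ T}

/-- The kernel of a linear relation. -/
def kerr (T : Set (E × F)) : Set E := {x | (x, (0 : F)) ∈ T}

/-- The adjoint relation: `T* = {(h,k) : ⟪h, f'⟫ = ⟪k, f⟫ for all (f,f') ∈ T}`. -/
def adj (T : Set (E × F)) : Set (F × E) :=
  {q | ∀ p ∈ T, ⟪q.2, p.1⟫_ℂ = ⟪q.1, p.2⟫_ℂ}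

/-- The graph of the linear operator `Q` restricted to the domain `D`. -/
def graphOn (Q : E →ₗ[ℂ] F) (D : Set E) : Set (E × F) :=
  {p | p.1 ∈ D ∧ p.2 = Q p.1}

/-- The companion relation `J_c = {(Q_c φ, φ' - cφ) : (φ,φ') ∈ S}` of a representing
map `Q` for the form `t(S) - c`. -/
def companion (S : Submodule ℂ (E × E)) (c : ℝ) (Q : E →ₗ[ℂ] F) : Set (F × E) :=
  {r | ∃ p ∈ S, r = (Q p.1, p.2 - (c : ℂ) • p.1)}

/-- For a linear operator `Q` with domain `D`, an element `φ ∈ H` belongs to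
`ran Q*` if and only if there exists `c_φ` with `|⟪f, φ⟫| ≤ c_φ ‖Q f‖` for all
`f ∈ dom Q`. -/
lemma norm_inner_symm_aux (x y : E) : ‖⟪x, y⟫_ℂ‖ = ‖⟪y, x⟫_ℂ‖ := by
  rw [← inner_conj_symm x y, RCLike.norm_conj]

theorem mem_ran_adj_iff (D : Submodule ℂ E) (Q : E →ₗ[ℂ] F) (φ : E) :
    φ ∈ ran (adj (graphOn Q (D : Set E))) ↔
      ∃ cφ : ℝ, ∀ f ∈ D, ‖⟪f, φ⟫_ℂ‖ ≤ cφ * ‖Q f‖ := by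
  constructor
  · rintro ⟨⟨k, φ'⟩, hq, rfl⟩
    refine ⟨‖k‖, fun f hf => ?_⟩
    have h := hq (f, Q f) ⟨hf, rfl⟩
    simp only at h
    calc ‖⟪f, φ'⟫_ℂ‖ = ‖⟪φ', f⟫_ℂ‖ := norm_inner_symm_aux f φ'
      _ = ‖⟪k, Q f⟫_ℂ‖ := by rw [h]
      _ ≤ ‖k‖ * ‖Q f‖ := norm_inner_le_norm _ _
  · rintro ⟨cφ, hc⟩
    set c : ℝ := max cφ 0 with hcdef
    have hc' : ∀ f ∈ D, ‖⟪f, φ⟫_ℂ‖ ≤ c * ‖Q f‖ := fun f hf =>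
      (hc f hf).trans (by
        have := mul_le_mul_of_nonneg_right (le_max_left cφ 0) (norm_nonneg (Q f))
        linarith)
    set T : D →ₗ[ℂ] F := Q.domRestrict D with hT
    set ψ : D →ₗ[ℂ] ℂ := ((innerSL ℂ φ).toLinearMap).comp D.subtype with hψ
    have hker : LinearMap.ker T ≤ LinearMap.ker ψ := by
      intro x hx
      have hx' : Q (x : E) = 0 := hx
      have := hc' (x : E) x.2
      rw [hx'] at this
      simp only [norm_zero, mul_zero] at this
      have h0 : ‖⟪(x : E), φ⟫_ℂ‖ = 0 := le_antisymm this (norm_nonneg _)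
      have : ⟪(x : E), φ⟫_ℂ = 0 := norm_eq_zero.mp h0
      have h2 : ⟪φ, (x : E)⟫_ℂ = 0 := by rw [← inner_conj_symm, this]; simp
      simpa [ψ, LinearMap.mem_ker] using h2
    set g₀ : (D ⧸ LinearMap.ker T) →ₗ[ℂ] ℂ := (LinearMap.ker T).liftQ ψ hker with hg₀
    set e := T.quotKerEquivRange with he
    set g : LinearMap.range T →ₗ[ℂ] ℂ := g₀.comp (e.symm : LinearMap.range T →ₗ[ℂ] (D ⧸ LinearMap.ker T)) with hg
    have key : ∀ (f : D), g ⟨T f, LinearMap.mem_range_self T f⟩ = ⟪φ, (f : E)⟫_ℂ := by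
      intro f
      have h1 : e (Submodule.Quotient.mk f) = ⟨T f, LinearMap.mem_range_self T f⟩ :=
        Subtype.ext (T.quotKerEquivRange_apply_mk f)
      have h2 : e.symm ⟨T f, LinearMap.mem_range_self T f⟩ = Submodule.Quotient.mk f := by
        rw [← h1, LinearEquiv.symm_apply_apply]
      simp [g, h2, g₀, ψ]
    have hbound : ∀ y : LinearMap.range T, ‖g y‖ ≤ c * ‖(y : F)‖ := by
      rintro ⟨y, hy⟩
      obtain ⟨f, hf⟩ := hy
      have : (⟨y, ⟨f, hf⟩⟩ : LinearMap.range T) = ⟨T f, LinearMap.mem_range_self T f⟩ := by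
        simp [hf]
      rw [this, key f]
      have hnorm : ‖⟪φ, (f : E)⟫_ℂ‖ = ‖⟪(f : E), φ⟫_ℂ‖ := norm_inner_symm_aux _ _
      rw [hnorm]
      calc ‖⟪(f : E), φ⟫_ℂ‖ ≤ c * ‖Q (f : E)‖ := hc' _ f.2
        _ = c * ‖(⟨T f, LinearMap.mem_range_self T f⟩ : LinearMap.range T)‖ := by simp [T]
        _ = c * ‖((⟨T f, LinearMap.mem_range_self T f⟩ : LinearMap.range T) : F)‖ := rfl
    set gc : LinearMap.range T →L[ℂ] ℂ := g.mkContinuous c hbound with hgc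
    obtain ⟨G, hG, -⟩ := exists_extension_norm_eq (LinearMap.range T) gc
    set k : F := (InnerProductSpace.toDual ℂ F).symm G with hk
    refine ⟨(k, φ), ?_, rfl⟩
    rintro ⟨f, y⟩ ⟨hf, hy⟩
    simp only at hy ⊢
    have h1 : ⟪k, y⟫_ℂ = G y := InnerProductSpace.toDual_symm_apply
    have h2 : G y = gc ⟨y, ⟨⟨f, hf⟩, by simp [T, hy]⟩⟩ := by
      exact hG ⟨y, ⟨⟨f, hf⟩, by simp [T, hy]⟩⟩
    have h3 : gc ⟨y, ⟨⟨f, hf⟩, by simp [T, hy]⟩⟩ = ⟪φ, f⟫_ℂ := by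
      have : (⟨y, ⟨⟨f, hf⟩, by simp [T, hy]⟩⟩ : LinearMap.range T)
          = ⟨T ⟨f, hf⟩, LinearMap.mem_range_self T ⟨f, hf⟩⟩ := by
        simp [T, hy]
      rw [hgc]
      show g _ = _
      rw [this, key ⟨f, hf⟩]
    rw [h1, h2, h3]
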